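/- Let q be an odd prime and ℓ₁ < ℓ₂ primes with ℓ₂ ≤ q. Then Q(ζ_q, ℓ₂^{1/q}) is not contained in Q(ζ_q, ℓ₁^{1/q}); equivalently, ℓ₂^{1/q} ∉ Q(ζ_q, ℓ₁^{1/q}). -/

import Mathlib

open Polynomial IntermediateField
set_option maxHeartbeats 1600000

lemma no_rat_qth_root {q p : ℕ} (hq : q.Prime) (hp : p.Prime) {r : ℚ}
    (hr : padicValRat p r = 1) (s : ℚ) : s ^ q ≠ r := by
  intro h
  haveI : Fact p.Prime := ⟨hp⟩
  have hr0 : r ≠ 0 := by rintro rfl; simp at hr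
  have hs : s ≠ 0 := by rintro rfl; rw [zero_pow hq.ne_zero] at h; exact hr0 h.symm
  have hv := padicValRat.pow (p := p) s (k := q)
  rw [h, hr] at hv
  have : (q : ℤ) ∣ 1 := Dvd.intro _ hv.symm
  have := Int.le_of_dvd one_pos this
  have := hq.two_le
  omega

lemma val_div_pow {p ℓ : ℕ} (hp : p.Prime) (hℓ : ℓ.Prime) (hne : ¬ p ∣ ℓ) (i : ℕ) :
    padicValRat p ((p : ℚ) / (ℓ : ℚ) ^ i) = 1 := by
  haveI : Fact p.Prime := ⟨hp⟩
  have hp0 : (p : ℚ) ≠ 0 := Nat.cast_ne_zero.mpr hp.ne_zero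
  have hℓ0 : (ℓ : ℚ) ≠ 0 := Nat.cast_ne_zero.mpr hℓ.ne_zero
  rw [padicValRat.div hp0 (pow_ne_zero i hℓ0), padicValRat.self hp.one_lt,
    padicValRat.pow (ℓ : ℚ)]
  have : padicValRat p (ℓ : ℚ) = 0 := by
    rw [padicValRat.of_nat, padicValNat.eq_zero_of_not_dvd hne]
    simp
  rw [this]; ring

lemma qth_root_in_field {q : ℕ} (hq : q.Prime) {K : Type*} [Field K] [Algebra ℚ K]
    [FiniteDimensional ℚ K] {c : K} {r : ℚ} (hc : c ^ q = algebraMap ℚ K r)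
    (hnr : ∀ s : ℚ, s ^ q ≠ r) : q ∣ Module.finrank ℚ K := by
  have hirr : Irreducible (X ^ q - C r) := X_pow_sub_C_irreducible_of_prime hq hnr
  have hint : IsIntegral ℚ c := IsIntegral.of_finite ℚ c
  have haev : (Polynomial.aeval c) (X ^ q - C r) = 0 := by
    simp [hc]
  have hmin : minpoly ℚ c = X ^ q - C r :=
    (minpoly.eq_of_irreducible_of_monic hirr haev (monic_X_pow_sub_C r hq.ne_zero)).symm
  have h1 : Module.finrank ℚ ℚ⟮c⟯ = q := by
    rw [IntermediateField.adjoin.finrank hint, hmin, natDegree_X_pow_sub_C]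
  have h2 := Module.finrank_mul_finrank ℚ (ℚ⟮c⟯ : IntermediateField ℚ K) K
  rw [h1] at h2
  exact ⟨_, h2.symm⟩

theorem aux_kummer (q ℓ₁ ℓ₂ : ℕ) (hq : q.Prime) (hℓ₁ : ℓ₁.Prime) (hℓ₂ : ℓ₂.Prime)
    (hlt : ℓ₁ < ℓ₂) (ζ α β : ℂ) (hζ : IsPrimitiveRoot ζ q)
    (hα : α ^ q = (ℓ₂ : ℂ)) (hβ : β ^ q = (ℓ₁ : ℂ))
    (hmem : α ∈ ℚ⟮ζ, β⟯) : False := by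
  haveI : NeZero q := ⟨hq.ne_zero⟩
  have hq2 := hq.two_le
  set K : IntermediateField ℚ ℂ := ℚ⟮ζ⟯ with hKdef
  have hζmem : ζ ∈ K := mem_adjoin_simple_self ℚ ζ
  haveI : FiniteDimensional ℚ K := adjoin.finiteDimensional ((hζ.isIntegral hq.pos).tower_top (A := ℚ))
  have hKrank : Module.finrank ℚ K = q - 1 := by
    rw [hKdef, IntermediateField.adjoin.finrank ((hζ.isIntegral hq.pos).tower_top (A := ℚ)),
      ← cyclotomic_eq_minpoly_rat hζ hq.pos, natDegree_cyclotomic, Nat.totient_prime hq]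
  have noqth : ∀ r : ℚ, (∀ s : ℚ, s ^ q ≠ r) → ∀ c : K, c ^ q ≠ algebraMap ℚ K r := by
    intro r hr c hc
    have := qth_root_in_field hq hc hr
    rw [hKrank] at this
    have := Nat.le_of_dvd (by omega) this
    omega
  -- irreducibility of X^q - ℓ₁ over K
  have hirrK : Irreducible (X ^ q - C ((ℓ₁ : K))) := by
    apply X_pow_sub_C_irreducible_of_prime hq
    intro b hb
    refine noqth (ℓ₁ : ℚ) (no_rat_qth_root hq hℓ₁ ?_) b ?_
    · exact_mod_cast padicValRat.self hℓ₁.one_lt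
    · rw [hb, map_natCast]
  -- the extension L = K(β)
  have hβ0 : β ≠ 0 := by
    intro h; rw [h, zero_pow hq.ne_zero] at hβ
    exact (Nat.cast_ne_zero.mpr hℓ₁.ne_zero) hβ.symm
  have hα0 : α ≠ 0 := by
    intro h; rw [h, zero_pow hq.ne_zero] at hα
    exact (Nat.cast_ne_zero.mpr hℓ₂.ne_zero) hα.symm
  have hβint : IsIntegral K β := by
    refine ⟨X ^ q - C ((ℓ₁ : K)), monic_X_pow_sub_C _ hq.ne_zero, ?_⟩
    simp [hβ]
  have hmin : minpoly K β = X ^ q - C ((ℓ₁ : K)) := by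
    refine (minpoly.eq_of_irreducible_of_monic hirrK ?_ (monic_X_pow_sub_C _ hq.ne_zero)).symm
    simp [hβ]
  haveI : FiniteDimensional K K⟮β⟯ := adjoin.finiteDimensional hβint
  have hLrank : Module.finrank K K⟮β⟯ = q := by
    rw [adjoin.finrank hβint, hmin, natDegree_X_pow_sub_C]
  set gen : K⟮β⟯ := AdjoinSimple.gen K β with hgendef
  have hgenc : (gen : ℂ) = β := rfl
  have hinj : Function.Injective (algebraMap (K⟮β⟯) ℂ) := (algebraMap (K⟮β⟯) ℂ).injective
  have hgen_pow : gen ^ q = algebraMap K K⟮β⟯ ((ℓ₁ : K)) := by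
    apply hinj
    push_cast
    exact hβ
  have htop : (K⟮gen⟯ : IntermediateField K K⟮β⟯) = ⊤ := by
    apply adjoin_eq_top_of_algebra
    have := (adjoin.powerBasis hβint).adjoin_gen_eq_top
    rwa [adjoin.powerBasis_gen] at this
  have hζK : IsPrimitiveRoot (⟨ζ, hζmem⟩ : K) q := by
    rw [← IsPrimitiveRoot.coe_submonoidClass_iff]
    exact hζ
  have hprim : (primitiveRoots q (K : Type _)).Nonempty := by
    exact ⟨⟨ζ, hζmem⟩, (mem_primitiveRoots hq.pos).mpr hζK⟩
  have hprim' : (primitiveRoots (Module.finrank K K⟮β⟯) (K : Type _)).Nonempty := by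
    rwa [hLrank]
  haveI hsplit : IsSplittingField K K⟮β⟯ (X ^ q - C ((ℓ₁ : K))) := by
    have := isSplittingField_X_pow_sub_C_of_root_adjoin_eq_top hprim'
      (a := (ℓ₁ : K)) (α := gen) (by rw [hLrank]; exact hgen_pow) htop
    rwa [hLrank] at this
  haveI hgal : IsGalois K K⟮β⟯ := isGalois_of_isSplittingField_X_pow_sub_C hprim hirrK _
  -- α lies in L
  have hαmem : α ∈ K⟮β⟯ := by
    have hsub : ℚ⟮ζ, β⟯ ≤ (K⟮β⟯).restrictScalars ℚ := by
      rw [adjoin_le_iff]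
      refine Set.insert_subset_iff.mpr ⟨?_, Set.singleton_subset_iff.mpr ?_⟩
      · exact (K⟮β⟯).algebraMap_mem ⟨ζ, hζmem⟩
      · exact mem_adjoin_simple_self K β
    exact hsub hmem
  set αL : K⟮β⟯ := ⟨α, hαmem⟩ with hαLdef
  have hαLc : (αL : ℂ) = α := rfl
  have hαL_pow : αL ^ q = algebraMap K K⟮β⟯ ((ℓ₂ : K)) := by
    apply hinj
    push_cast
    exact hα
  have hαL0 : αL ≠ 0 := by
    intro h
    apply hα0
    have := congrArg (algebraMap (K⟮β⟯) ℂ) h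
    exact this.trans (map_zero _)
  have hgen0 : gen ≠ 0 := by
    intro h
    apply hβ0
    have := congrArg (Subtype.val) h
    simpa [hgenc] using this
  set ζL : K⟮β⟯ := algebraMap K K⟮β⟯ ⟨ζ, hζmem⟩ with hζLdef
  have hζL : IsPrimitiveRoot ζL q := hζK.map_of_injective (algebraMap K (K⟮β⟯)).injective
  have hζL0 : ζL ≠ 0 := hζL.ne_zero hq.ne_zero
  -- the Galois group via Kummer theory
  set e := autEquivZmod hirrK (K⟮β⟯) hζK with hedef
  set σ := e.symm (Multiplicative.ofAdd ((1 : ℕ) : ZMod q)) with hσdef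
  have hσgen : σ gen = ζL ^ (1 : ℕ) * gen := by
    have := autEquivZmod_symm_apply_natCast hirrK (K⟮β⟯) hgen_pow hζK 1
    rw [← hedef, ← hσdef] at this
    rw [this, Algebra.smul_def, map_pow]
  -- σ acts on αL by some power of ζ
  have hσα_pow : (σ αL) ^ q = αL ^ q := by
    rw [← map_pow, hαL_pow, AlgEquiv.commutes]
  obtain ⟨a, -, hσα⟩ : ∃ a < q, ζL ^ a = σ αL / αL := by
    apply hζL.eq_pow_of_pow_eq_one
    rw [div_pow, hσα_pow, div_self (pow_ne_zero q hαL0)]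
  have hσα' : σ αL = ζL ^ a * αL := by
    rw [hσα, div_mul_cancel₀ _ hαL0]
  -- the fixed element x = αL / gen ^ a
  set x : K⟮β⟯ := αL / gen ^ a with hxdef
  have hσx : σ x = x := by
    rw [hxdef, map_div₀, map_pow, hσgen, hσα', mul_pow, pow_one]
    rw [mul_div_mul_left _ _ (pow_ne_zero a hζL0)]
  have hσpow : ∀ k : ℕ, (σ ^ k) x = x := by
    intro k
    induction k with
    | zero => rfl
    | succ n ih => rw [pow_succ, AlgEquiv.mul_apply, hσx, ih]
  have hfixall : ∀ τ : (K⟮β⟯ ≃ₐ[K] K⟮β⟯), τ x = x := by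
    intro τ
    have hτ : τ = σ ^ ((e τ).toAdd.val) := by
      apply e.injective
      rw [map_pow, hσdef, MulEquiv.apply_symm_apply, ← ofAdd_nsmul, nsmul_eq_mul,
        Nat.cast_one, mul_one, ZMod.natCast_val, ZMod.cast_id]
      exact (ofAdd_toAdd (e τ)).symm
    rw [hτ]
    exact hσpow _
  have hxbot : x ∈ Set.range (algebraMap K (K⟮β⟯)) := by
    rw [← IntermediateField.mem_bot, ← OrderIso.map_bot IsGalois.intermediateFieldEquivSubgroup.symm]
    rintro ⟨τ, -⟩
    exact hfixall τ
  obtain ⟨c, hc⟩ := hxbot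
  -- final contradiction
  have hcq : c ^ q = algebraMap ℚ K ((ℓ₂ : ℚ) / (ℓ₁ : ℚ) ^ a) := by
    apply (algebraMap K (K⟮β⟯)).injective
    rw [map_pow, hc, hxdef, div_pow, hαL_pow, ← pow_mul, mul_comm a q, pow_mul, hgen_pow,
      ← map_pow, ← map_div₀, ← IsScalarTower.algebraMap_apply]
    rw [IsScalarTower.algebraMap_apply ℚ K (K⟮β⟯)]
    congr 1
    push_cast
    ring
  refine noqth _ (no_rat_qth_root hq hℓ₂ (val_div_pow hℓ₂ hℓ₁ ?_ a)) c hcq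
  intro hdvd
  exact absurd (Nat.le_of_dvd hℓ₁.pos hdvd) (by omega)

theorem qth_root_not_in_kummer (q ℓ₁ ℓ₂ : ℕ) (hq : q.Prime) (hqodd : Odd q)
    (hℓ₁ : ℓ₁.Prime) (hℓ₂ : ℓ₂.Prime) (hlt : ℓ₁ < ℓ₂) (hle : ℓ₂ ≤ q) :
    (((ℓ₂ : ℝ) ^ ((q : ℝ)⁻¹) : ℝ) : ℂ) ∉
      ℚ⟮(Complex.exp (2 * Real.pi * Complex.I / q)),
        (((ℓ₁ : ℝ) ^ ((q : ℝ)⁻¹) : ℝ) : ℂ)⟯ := by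
  intro hmem
  have hpow : ∀ ℓ : ℕ, ((((ℓ : ℝ) ^ ((q : ℝ)⁻¹) : ℝ) : ℂ)) ^ q = (ℓ : ℂ) := by
    intro ℓ
    rw [← Complex.ofReal_pow, ← Real.rpow_natCast ((ℓ : ℝ) ^ ((q : ℝ)⁻¹)) q,
      ← Real.rpow_mul (Nat.cast_nonneg ℓ), inv_mul_cancel₀ (by exact_mod_cast hq.ne_zero),
      Real.rpow_one, Complex.ofReal_natCast]
  exact aux_kummer q ℓ₁ ℓ₂ hq hℓ₁ hℓ₂ hlt _ _ _
    (Complex.isPrimitiveRoot_exp q hq.ne_zero) (hpow ℓ₂) (hpow ℓ₁) hmem
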